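/- Let G be a δ-degenerate graph on n ≥ 1 vertices. Then there is a partition T_1, …, T_m of V(G) with m ≤ log₂ n (when n ≥ 2; m ≤ 1 when n = 1) such that for every i and every v ∈ T_i, the degree of v in the induced subgraph G[V(G) \ (T_1 ∪ ⋯ ∪ T_{i−1})] is at most 4δ. -/

import Mathlib

universe u v

variable {V : Type u}

/-- The open neighborhood of a set `D`: vertices outside `D` with a neighbor in `D`. -/
def nbhd (G : SimpleGraph V) (D : Set V) : Set V :=
  {w | w ∉ D ∧ ∃ u ∈ D, G.Adj u w}

/-- `u` and `w` are joined by a walk all of whose vertices lie in `S`. -/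
def ConnectedIn (G : SimpleGraph V) (S : Set V) (u w : V) : Prop :=
  ∃ p : G.Walk u w, ∀ x ∈ p.support, x ∈ S

/-- `D` is a connected component of the subgraph of `G` induced on `S`. -/
def IsCompOf (G : SimpleGraph V) (S : Set V) (D : Set V) : Prop :=
  D.Nonempty ∧ D ⊆ S ∧ (∀ u ∈ D, ∀ w ∈ D, ConnectedIn G D u w) ∧
    ∀ u ∈ D, ∀ w ∈ S, G.Adj u w → w ∈ D

/-- `X` is a minimal separator: some `u, w` outside `X` are separated by `X`
but by no proper subset of `X`. -/
def IsMinimalSeparator (G : SimpleGraph V) (X : Set V) : Prop :=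
  ∃ u w : V, u ∉ X ∧ w ∉ X ∧ ¬ ConnectedIn G Xᶜ u w ∧
    ∀ Y : Set V, Y ⊂ X → ConnectedIn G Yᶜ u w

/-- A tree decomposition of the subgraph of `G` induced on `W`. -/
structure IsTreeDecompOn {T : Type v} (G : SimpleGraph V) (W : Set V)
    (tree : SimpleGraph T) (χ : T → Set V) : Prop where
  isTree : tree.IsTree
  bags_subset : ∀ t, χ t ⊆ W
  mem_bag : ∀ x ∈ W, ∃ t, x ∈ χ t
  edge_bag : ∀ x ∈ W, ∀ y ∈ W, G.Adj x y → ∃ t, x ∈ χ t ∧ y ∈ χ t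
  trace_connected : ∀ x : V, ∀ t₁, x ∈ χ t₁ → ∀ t₂, x ∈ χ t₂ →
    ConnectedIn tree {t | x ∈ χ t} t₁ t₂

/-- A tree decomposition of `G`. -/
def IsTreeDecomp {T : Type v} (G : SimpleGraph V)
    (tree : SimpleGraph T) (χ : T → Set V) : Prop :=
  IsTreeDecompOn G Set.univ tree χ

/-- The treewidth of `G`: the least `w` such that `G` has a tree decomposition
all of whose bags have at most `w + 1` vertices. -/
noncomputable def treewidth (G : SimpleGraph V) : ℕ :=
  sInf {w | ∃ (n : ℕ) (tree : SimpleGraph (Fin n)) (χ : Fin n → Set V),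
    IsTreeDecomp G tree χ ∧ ∀ t, (χ t).ncard ≤ w + 1}

/-- `G` is chordal: it has no induced cycle of length at least 4. -/
def IsChordal (G : SimpleGraph V) : Prop :=
  ∀ n : ℕ, 4 ≤ n → ¬ ∃ f : Fin n → V, Function.Injective f ∧
    ∀ i j : Fin n, G.Adj (f i) (f j) ↔
      ((i.val + 1) % n = j.val ∨ (j.val + 1) % n = i.val)

/-- `H` is a minimal chordal completion (fill-in) of `G`. -/
def IsMinimalChordalCompletion (G H : SimpleGraph V) : Prop :=
  G ≤ H ∧ IsChordal H ∧
    ∀ H' : SimpleGraph V, G ≤ H' → H' ≤ H → IsChordal H' → H' = H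

/-- `Ω` is a potential maximal clique of `G`: a maximal clique of some minimal
chordal completion of `G`. -/
def IsPMC (G : SimpleGraph V) (Ω : Set V) : Prop :=
  ∃ H : SimpleGraph V, IsMinimalChordalCompletion G H ∧
    H.IsClique Ω ∧ ∀ Ω' : Set V, H.IsClique Ω' → Ω ⊆ Ω' → Ω' = Ω

/-- The clique number `ω(G)`. -/
noncomputable def cliqueNumber (G : SimpleGraph V) : ℕ :=
  sSup {n | ∃ s : Finset V, G.IsNClique n s}

/-- A stable (independent) set of vertices. -/
def StableSet (G : SimpleGraph V) (S : Set V) : Prop :=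
  ∀ u ∈ S, ∀ w ∈ S, ¬ G.Adj u w

/-- The Ramsey number `R(t, s)`: the least `n` such that every graph on `n`
vertices contains a clique of size `t` or a stable set of size `s`. -/
noncomputable def ramseyNum (t s : ℕ) : ℕ :=
  sInf {n | ∀ G : SimpleGraph (Fin n),
    (∃ K : Finset (Fin n), G.IsNClique t K) ∨
    (∃ S : Finset (Fin n), S.card = s ∧ StableSet G ↑S)}

/-- `G` is `d`-degenerate: every induced subgraph has a vertex of degree less
than `d` (within that subgraph). -/
def DegenerateLE (G : SimpleGraph V) (d : ℕ) : Prop :=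
  ∀ W : Set V, W.Nonempty → ∃ x ∈ W, (W ∩ G.neighborSet x).ncard < d

/-- `D` is the big component for `x`: a component of `G \ N[x]` with more than
half of all vertices. -/
def IsBigComp (G : SimpleGraph V) (x : V) (D : Set V) : Prop :=
  IsCompOf G ((insert x (G.neighborSet x))ᶜ) D ∧ Nat.card V < 2 * D.ncard

/-- The `C`-side of the canonical star separation: `C(x) = {x} ∪ N(B(x))`. -/
def Cside (G : SimpleGraph V) (B : V → Set V) (x : V) : Set V :=
  insert x (nbhd G (B x))

/-- The `A`-side of the canonical star separation. -/
def Aside (G : SimpleGraph V) (B : V → Set V) (x : V) : Set V :=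
  (B x ∪ Cside G B x)ᶜ

/-- Star twins. -/
def StarTwins (G : SimpleGraph V) (B : V → Set V) (x y : V) : Prop :=
  B x = B y ∧ Cside G B x \ {x} = Cside G B y \ {y} ∧
    Aside G B x ∪ {x} = Aside G B y ∪ {y}

/-- The relation `≤_A` (partial order by `A`-sides, ties among star twins
broken by the total order `O`). -/
def leA (G : SimpleGraph V) (B : V → Set V) (O : V → ℕ) (x y : V) : Prop :=
  x = y ∨ (StarTwins G B x y ∧ O x < O y) ∨
    (¬ StarTwins G B x y ∧ y ∈ Aside G B x)

/-- `Core(S)`: the `≤_A`-minimal elements of `S`. -/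
def CoreS (G : SimpleGraph V) (S : Set V) (B : V → Set V) (O : V → ℕ) : Set V :=
  {x ∈ S | ∀ u ∈ S, leA G B O u x → u = x}

/-- The central bag `β(S)`. -/
def centralBag (G : SimpleGraph V) (S : Set V) (B : V → Set V) (O : V → ℕ) :
    Set V :=
  ⋂ x ∈ CoreS G S B O, (B x ∪ Cside G B x)

/-- `G` has a clique cutset. -/
def HasCliqueCutset (G : SimpleGraph V) : Prop :=
  ∃ K : Set V, G.IsClique K ∧ ∃ u w, u ∉ K ∧ w ∉ K ∧ ¬ ConnectedIn G Kᶜ u w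

/-- A chordless (induced) path, as a walk. -/
def IsInducedPathW (G : SimpleGraph V) {a b : V} (P : G.Walk a b) : Prop :=
  P.IsPath ∧ ∀ i j : ℕ, i + 2 ≤ j → j ≤ P.length →
    ¬ G.Adj (P.getVert i) (P.getVert j)

/-- Two `a`–`b` walks have disjoint and anticomplete interiors. -/
def IntDisjAnticomplete (G : SimpleGraph V) {a b : V} (P Q : G.Walk a b) : Prop :=
  ∀ u ∈ P.support, ∀ w ∈ Q.support, u ≠ a → u ≠ b → w ≠ a → w ≠ b →
    u ≠ w ∧ ¬ G.Adj u w

/-- `G` contains a theta (as an induced subgraph). -/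
def HasTheta (G : SimpleGraph V) : Prop :=
  ∃ (a b : V) (P₁ P₂ P₃ : G.Walk a b),
    ¬ G.Adj a b ∧
    IsInducedPathW G P₁ ∧ 2 ≤ P₁.length ∧
    IsInducedPathW G P₂ ∧ 2 ≤ P₂.length ∧
    IsInducedPathW G P₃ ∧ 2 ≤ P₃.length ∧
    IntDisjAnticomplete G P₁ P₂ ∧
    IntDisjAnticomplete G P₁ P₃ ∧
    IntDisjAnticomplete G P₂ P₃


private lemma sumDeg {V : Type u} [Fintype V] [DecidableEq V] (G : SimpleGraph V)
    [DecidableRel G.Adj] (d : ℕ) (h : DegenerateLE G d) (W : Finset V) :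
    ∑ v ∈ W, (W.filter (G.Adj v)).card ≤ 2 * d * W.card := by
  induction W using Finset.strongInduction with
  | _ W ih =>
    rcases W.eq_empty_or_nonempty with rfl | hne
    · simp
    obtain ⟨x, hxW, hxd⟩ := h ↑W (Finset.coe_nonempty.mpr hne)
    have hxW' : x ∈ W := hxW
    have hdeg : (W.filter (G.Adj x)).card < d := by
      have hset : (↑W ∩ G.neighborSet x : Set V) = ↑(W.filter (G.Adj x)) := by
        ext u; simp [SimpleGraph.mem_neighborSet]
      rwa [hset, Set.ncard_coe_finset] at hxd
    set W' := W.erase x with hW'def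
    have hins : W = insert x W' := (Finset.insert_erase hxW').symm
    have hxnot : x ∉ W' := Finset.notMem_erase x W
    have hsplit : ∀ v, W.filter (G.Adj v) =
        if G.Adj v x then insert x (W'.filter (G.Adj v)) else W'.filter (G.Adj v) := by
      intro v
      conv_lhs => rw [hins]
      rw [Finset.filter_insert]
    have hcard : ∀ v ∈ W', (W.filter (G.Adj v)).card
        = (W'.filter (G.Adj v)).card + if G.Adj v x then 1 else 0 := by
      intro v hv
      rw [hsplit v]
      by_cases hadj : G.Adj v x
      · simp only [hadj, if_true]
        rw [Finset.card_insert_of_notMem (fun hx => hxnot (Finset.mem_of_mem_filter _ hx))]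
      · simp [hadj]
    have hfx : W.filter (G.Adj x) = W'.filter (G.Adj x) := by
      rw [hsplit x]; simp [G.irrefl]
    have hsum2 : ∑ v ∈ W', (if G.Adj v x then 1 else 0) = (W'.filter (G.Adj x)).card := by
      rw [Finset.card_filter]
      apply Finset.sum_congr rfl
      intro v hv
      simp [G.adj_comm]
    have hIH : ∑ v ∈ W', (W'.filter (G.Adj v)).card ≤ 2 * d * W'.card :=
      ih W' (Finset.erase_ssubset hxW')
    have hcw : W'.card + 1 = W.card := Finset.card_erase_add_one hxW'
    have hmain : ∑ v ∈ W, (W.filter (G.Adj v)).card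
        = (W'.filter (G.Adj x)).card + (∑ v ∈ W', (W'.filter (G.Adj v)).card
            + (W'.filter (G.Adj x)).card) := by
      rw [← Finset.add_sum_erase W _ hxW', ← hW'def, hfx]
      congr 1
      rw [Finset.sum_congr rfl hcard, Finset.sum_add_distrib, hsum2]
    rw [hmain]
    have hfx' : (W'.filter (G.Adj x)).card < d := by rwa [hfx] at hdeg
    have h2 : 2 * d * W.card = 2 * d * W'.card + 2 * d := by rw [← hcw]; ring
    rw [h2]
    linarith

/-- A `d`-degenerate graph on `n ≥ 1` vertices has a partition `T₁, …, T_m`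
with `m ≤ log₂ n` (for `n ≥ 2`; `m ≤ 1` for `n = 1`) such that every vertex of
`T_i` has degree at most `4d` in the subgraph induced on `T_i ∪ ⋯ ∪ T_m`. -/
theorem stmt6 [Finite V] (G : SimpleGraph V) (d : ℕ) (h : DegenerateLE G d)
    (hn : 1 ≤ Nat.card V) :
    ∃ (m : ℕ) (P : Fin m → Set V),
      (∀ i j, i ≠ j → Disjoint (P i) (P j)) ∧
      (⋃ i, P i) = Set.univ ∧
      (2 ≤ Nat.card V → m ≤ Nat.log 2 (Nat.card V)) ∧
      (Nat.card V = 1 → m ≤ 1) ∧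
      ∀ i, ∀ x ∈ P i,
        ({u | ∃ j, i ≤ j ∧ u ∈ P j} ∩ G.neighborSet x).ncard ≤ 4 * d := by
  classical
  cases nonempty_fintype V
  haveI : DecidableEq V := Classical.decEq V
  haveI : DecidableRel G.Adj := fun _ _ => Classical.propDecidable _
  have hne : Nonempty V := (Nat.card_pos_iff.mp hn).1
  have hd : 1 ≤ d := by
    obtain ⟨x, -, hx⟩ := h Set.univ Set.univ_nonempty
    omega
  have hnn : Nat.card V = Finset.univ.card (α := V) := by
    rw [Nat.card_eq_fintype_card, Finset.card_univ]
  set n := Nat.card V with hndef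
  -- the peeling sequence
  let R : ℕ → Finset V := fun i => Nat.rec Finset.univ
    (fun _ S => S.filter (fun v => 4 * d + 1 ≤ (S.filter (G.Adj v)).card)) i
  have hRsucc : ∀ i, R (i + 1)
      = (R i).filter (fun v => 4 * d + 1 ≤ ((R i).filter (G.Adj v)).card) := fun _ => rfl
  have hsub : ∀ i, R (i + 1) ⊆ R i := fun i => by
    rw [hRsucc]; exact Finset.filter_subset _ _
  have hmono : ∀ i j, i ≤ j → R j ⊆ R i := by
    intro i j hij
    induction j with
    | zero =>
      have : i = 0 := Nat.le_zero.mp hij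
      subst this; exact fun a ha => ha
    | succ j ihj =>
      rcases Nat.lt_or_ge i (j + 1) with hlt | hge
      · exact (hsub j).trans (ihj (Nat.lt_succ_iff.mp hlt))
      · have : i = j + 1 := le_antisymm hij hge
        subst this; exact fun a ha => ha
  have hhalf : ∀ i, 2 * (R (i + 1)).card ≤ (R i).card := by
    intro i
    have h1 : (R (i + 1)).card * (4 * d + 1) ≤ ∑ v ∈ R (i + 1), ((R i).filter (G.Adj v)).card := by
      have := Finset.card_nsmul_le_sum (R (i + 1)) (fun v => ((R i).filter (G.Adj v)).card)
        (4 * d + 1) (fun v hv => by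
          rw [hRsucc] at hv
          exact (Finset.mem_filter.mp hv).2)
      simpa [smul_eq_mul] using this
    have h2 : ∑ v ∈ R (i + 1), ((R i).filter (G.Adj v)).card
        ≤ ∑ v ∈ R i, ((R i).filter (G.Adj v)).card :=
      Finset.sum_le_sum_of_subset (hsub i)
    have h3 : ∑ v ∈ R i, ((R i).filter (G.Adj v)).card ≤ 2 * d * (R i).card :=
      sumDeg G d h (R i)
    have h4 : (R (i + 1)).card * (4 * d + 1) ≤ 2 * d * (R i).card :=
      h1.trans (h2.trans h3)
    have h5 : (2 * (R (i + 1)).card) * (4 * d + 1) ≤ (R i).card * (4 * d + 1) := by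
      calc (2 * (R (i + 1)).card) * (4 * d + 1)
          = 2 * ((R (i + 1)).card * (4 * d + 1)) := by ring
        _ ≤ 2 * (2 * d * (R i).card) := by omega
        _ = 4 * d * (R i).card := by ring
        _ ≤ (4 * d + 1) * (R i).card := Nat.mul_le_mul_right _ (by omega)
        _ = (R i).card * (4 * d + 1) := by ring
    exact Nat.le_of_mul_le_mul_right h5 (by omega)
  have hpow : ∀ i, 2 ^ i * (R i).card ≤ n := by
    intro i
    induction i with
    | zero =>
      rw [pow_zero, one_mul, hnn]
      exact Finset.card_le_card (fun a _ => Finset.mem_univ a)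
    | succ i ihi =>
      calc 2 ^ (i + 1) * (R (i + 1)).card = 2 ^ i * (2 * (R (i + 1)).card) := by ring
        _ ≤ 2 ^ i * (R i).card := Nat.mul_le_mul_left _ (hhalf i)
        _ ≤ n := ihi
  have hex : ∃ i, R i = ∅ := by
    refine ⟨n, Finset.card_eq_zero.mp ?_⟩
    have h1 := hpow n
    have hlt : n < 2 ^ n := Nat.lt_two_pow_self
    by_contra hc
    have hc1 : 1 ≤ (R n).card := Nat.pos_of_ne_zero hc
    have h2 : 2 ^ n * 1 ≤ 2 ^ n * (R n).card := Nat.mul_le_mul_left _ hc1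
    omega
  obtain ⟨m, hm0, hmlt⟩ : ∃ m, R m = ∅ ∧ ∀ j, j < m → R j ≠ ∅ := by
    haveI hdec : DecidablePred fun i => R i = ∅ := fun _ => Classical.propDecidable _
    exact ⟨@Nat.find _ hdec hex, @Nat.find_spec _ hdec hex,
      fun j hj => @Nat.find_min _ hdec hex j hj⟩
  refine ⟨m, fun i => ((R i.val \ R (i.val + 1) : Finset V) : Set V), ?_, ?_, ?_, ?_, ?_⟩
  · -- disjoint
    have key : ∀ i j : Fin m, i.val < j.val →
        Disjoint ((R i.val \ R (i.val + 1) : Finset V) : Set V)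
          ((R j.val \ R (j.val + 1) : Finset V) : Set V) := by
      intro i j hij
      rw [Set.disjoint_left]
      intro u hui huj
      have h1 : u ∉ R (i.val + 1) := by
        simp only [Finset.coe_sdiff, Set.mem_diff, Finset.mem_coe] at hui
        exact hui.2
      have h2 : u ∈ R (j.val) := by
        simp only [Finset.coe_sdiff, Set.mem_diff, Finset.mem_coe] at huj
        exact huj.1
      exact h1 (hmono (i.val + 1) j.val hij h2)
    intro i j hij
    rcases lt_or_gt_of_ne (fun hv => hij (Fin.val_injective hv)) with hlt | hgt
    · exact key i j hlt
    · exact (key j i hgt).symm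
  · -- union
    apply Set.eq_univ_iff_forall.mpr
    intro v
    rw [Set.mem_iUnion]
    have hv0 : v ∈ R 0 := Finset.mem_univ v
    have hvex : ∃ j, v ∉ R j := ⟨m, by rw [hm0]; exact Finset.notMem_empty v⟩
    obtain ⟨jv, hjv, hjmin⟩ : ∃ jv, v ∉ R jv ∧ ∀ k, k < jv → v ∈ R k := by
      haveI hdec2 : DecidablePred fun j => v ∉ R j := fun _ => Classical.propDecidable _
      exact ⟨@Nat.find _ hdec2 hvex, @Nat.find_spec _ hdec2 hvex,
        fun k hk => not_not.mp (@Nat.find_min _ hdec2 hvex k hk)⟩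
    have hjvpos : jv ≠ 0 := by
      intro h0
      rw [h0] at hjv
      exact hjv hv0
    obtain ⟨j, hj⟩ : ∃ j, jv = j + 1 := Nat.exists_eq_succ_of_ne_zero hjvpos
    have hvj : v ∈ R j := hjmin j (by omega)
    have hvj1 : v ∉ R (j + 1) := by rwa [hj] at hjv
    have hjm : j < m := by
      by_contra hc
      push_neg at hc
      exact (Finset.notMem_empty v) (hm0 ▸ hmono m j hc hvj)
    refine ⟨⟨j, hjm⟩, ?_⟩
    simp only [Finset.coe_sdiff, Set.mem_diff, Finset.mem_coe]
    exact ⟨hvj, hvj1⟩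
  · -- m ≤ log₂ n
    intro hn2
    by_contra hcon
    push_neg at hcon
    set L := Nat.log 2 n with hLdef
    have hL1 : 1 ≤ L := Nat.log_pos one_lt_two hn2
    obtain ⟨K, hK⟩ : ∃ K, L = K + 1 := ⟨L - 1, by omega⟩
    have hRL : (R L).Nonempty :=
      Finset.nonempty_of_ne_empty (hmlt L hcon)
    obtain ⟨v, hv⟩ := hRL
    rw [hK, hRsucc] at hv
    obtain ⟨hvK, hvdeg⟩ := Finset.mem_filter.mp hv
    have hbig : 4 * d + 2 ≤ (R K).card := by
      have hsub2 : insert v ((R K).filter (G.Adj v)) ⊆ R K := by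
        intro u hu
        rcases Finset.mem_insert.mp hu with rfl | hu'
        · exact hvK
        · exact Finset.mem_of_mem_filter _ hu'
      have hvni : v ∉ (R K).filter (G.Adj v) := by
        simp [G.irrefl]
      have := Finset.card_le_card hsub2
      rw [Finset.card_insert_of_notMem hvni] at this
      omega
    have hKn : 2 ^ K * (4 * d + 2) ≤ n :=
      le_trans (Nat.mul_le_mul_left _ hbig) (hpow K)
    have hnlt : n < 2 ^ (L + 1) := Nat.lt_pow_succ_log_self one_lt_two n
    have h2L : (2 : ℕ) ^ (L + 1) = 2 ^ K * 4 := by rw [hK]; ring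
    have : 4 * d + 2 < 4 := by
      have hlt2 : 2 ^ K * (4 * d + 2) < 2 ^ K * 4 := by omega
      exact Nat.lt_of_mul_lt_mul_left hlt2
    omega
  · -- n = 1 → m ≤ 1
    intro h1
    have := hpow 1
    rw [h1] at this
    have hR1 : R 1 = ∅ := Finset.card_eq_zero.mp (by omega)
    by_contra hc
    push_neg at hc
    exact hmlt 1 hc hR1
  · -- degree bound
    intro i x hx
    simp only [Finset.coe_sdiff, Set.mem_diff, Finset.mem_coe] at hx
    obtain ⟨hxR, hxnR⟩ := hx
    have hdeg : ((R i.val).filter (G.Adj x)).card ≤ 4 * d := by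
      by_contra hc
      push_neg at hc
      exact hxnR (by rw [hRsucc]; exact Finset.mem_filter.mpr ⟨hxR, by omega⟩)
    have hsubX : {u | ∃ j, i ≤ j ∧ u ∈ ((R j.val \ R (j.val + 1) : Finset V) : Set V)}
        ∩ G.neighborSet x ⊆ ↑((R i.val).filter (G.Adj x)) := by
      rintro u ⟨⟨j, hij, huj⟩, hadj⟩
      simp only [Finset.coe_sdiff, Set.mem_diff, Finset.mem_coe] at huj
      have huR : u ∈ R i.val := hmono i.val j.val hij huj.1
      simp only [Finset.coe_filter, Set.mem_setOf_eq]
      exact ⟨huR, hadj⟩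
    calc ({u | ∃ j, i ≤ j ∧ u ∈ ((R j.val \ R (j.val + 1) : Finset V) : Set V)}
          ∩ G.neighborSet x).ncard
        ≤ (↑((R i.val).filter (G.Adj x)) : Set V).ncard :=
          Set.ncard_le_ncard hsubX (Finset.finite_toSet _)
      _ = ((R i.val).filter (G.Adj x)).card := Set.ncard_coe_finset _
      _ ≤ 4 * d := hdeg
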